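/- Let V be a separable complex Banach space and let C be a weak-* compact convex subset of the dual space V*. Then every extreme point of C belongs to the weak-* closure of the set of weak-* exposed points of C. -/

import Mathlib

open Set Topology Filter

section Klee

variable {V : Type*} [NormedAddCommGroup V] [NormedSpace ℂ V]

/-- The supremum of `Re Ψ(g)` over `Ψ ∈ C`. -/
noncomputable def mm (C : Set (WeakDual ℂ V)) (g : V) : ℝ :=
  sSup ((fun Ψ : WeakDual ℂ V => (Ψ g).re) '' C)

theorem cont_re (g : V) : Continuous fun Ψ : WeakDual ℂ V => (Ψ g).re :=
  Complex.continuous_re.comp (WeakDual.eval_continuous g)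

theorem le_mm {C : Set (WeakDual ℂ V)} (hC : IsCompact C) {Ψ} (hΨ : Ψ ∈ C) (g : V) :
    (Ψ g).re ≤ mm C g :=
  le_csSup ((hC.image (cont_re g)).bddAbove) (mem_image_of_mem _ hΨ)

theorem exists_mm {C : Set (WeakDual ℂ V)} (hC : IsCompact C) (hne : C.Nonempty) (g : V) :
    ∃ Φ ∈ C, (Φ g).re = mm C g := by
  obtain ⟨Φ, hΦ, h⟩ := (hC.image (cont_re g)).sSup_mem (hne.image _)
  exact ⟨Φ, hΦ, h⟩

theorem re_apply (Ψ : WeakDual ℂ V) (g w : V) (t : ℝ) :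
    (Ψ (g + (t:ℂ) • w)).re = (Ψ g).re + t * (Ψ w).re := by
  rw [map_add, map_smul]
  simp [Complex.add_re, Complex.mul_re]

theorem absStep (A : Set (ℝ × ℝ)) (φ : ℝ → ℝ) {R η η' ε₀ : ℝ}
    (hle : ∀ t : ℝ, ∀ p ∈ A, p.1 + t * p.2 ≤ φ t)
    (hex : ∀ t : ℝ, ∃ p ∈ A, p.1 + t * p.2 = φ t)
    (hR : ∀ p ∈ A, |p.2| ≤ R) (hR0 : 0 < R)
    (hη : 0 < η) (hη' : 0 < η') (hε₀ : 0 < ε₀) :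
    ∃ ε δ : ℝ, 0 < ε ∧ ε ≤ ε₀ ∧ 0 < δ ∧
      (∀ p ∈ A, φ ε - δ < p.1 + ε * p.2 → φ 0 - η' < p.1) ∧
      (∀ p ∈ A, ∀ q ∈ A, φ ε - δ < p.1 + ε * p.2 → φ ε - δ < q.1 + ε * q.2 →
        |p.2 - q.2| ≤ η) := by
  classical
  obtain ⟨N, hN⟩ := exists_nat_gt (4 * R / η)
  have hN' : 4 * R < η * N := by
    rw [div_lt_iff₀ hη] at hN; linarith [hN]
  have hNpos : 0 < (N:ℝ) := by nlinarith
  obtain ⟨ε₁, hε₁, hε₁a, hε₁b⟩ : ∃ e : ℝ, 0 < e ∧ e ≤ ε₀ ∧ e * (8 * R) ≤ η' :=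
    ⟨min ε₀ (η' / (8 * R)), lt_min hε₀ (by positivity), min_le_left _ _, by
      have := min_le_right ε₀ (η' / (8 * R))
      calc min ε₀ (η' / (8 * R)) * (8 * R) ≤ (η' / (8 * R)) * (8 * R) := by nlinarith
      _ = η' := by field_simp⟩
  obtain ⟨Δ, hΔ, hΔeq⟩ : ∃ d : ℝ, 0 < d ∧ ((N:ℝ) + 2) * d = ε₁ :=
    ⟨ε₁ / (N + 2), by positivity, by field_simp⟩
  set t : ℕ → ℝ := fun i => (i + 1) * Δ with htdef
  have ht_succ : ∀ i : ℕ, t (i + 1) = t i + Δ := by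
    intro i; simp only [htdef]; push_cast; ring
  have ht_pos : ∀ i, 0 < t i := fun i => by positivity
  set D : ℕ → ℝ := fun i => φ (t (i + 1)) - φ (t i) with hDdef
  have ht_eq : ∀ i : ℕ, t i = ((i:ℝ) + 1) * Δ := fun i => by rw [htdef]
  have hDi : ∀ i, D i = φ (t (i + 1)) - φ (t i) := fun i => by rw [hDdef]
  clear_value t D
  clear htdef hDdef
  have hstep : ∀ a b : ℝ, φ a - φ b ≤ R * |a - b| := by
    intro a b
    obtain ⟨p, hp, heq⟩ := hex a
    have h1 := hle b p hp
    have h2 : |p.2| ≤ R := hR p hp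
    have h3 : (a - b) * p.2 ≤ |a - b| * |p.2| := by
      calc (a - b) * p.2 ≤ |(a - b) * p.2| := le_abs_self _
      _ = |a - b| * |p.2| := abs_mul _ _
    nlinarith [abs_nonneg (a - b)]
  have hDle : ∀ i, |D i| ≤ R * Δ := by
    intro i
    have htt : |t (i+1) - t i| = Δ := by rw [ht_succ i]; simp [abs_of_pos hΔ]
    rw [abs_le]
    refine ⟨?_, ?_⟩
    · have := hstep (t i) (t (i+1))
      rw [abs_sub_comm, htt] at this
      rw [hDi]; linarith
    · have := hstep (t (i+1)) (t i)
      rw [htt] at this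
      rw [hDi]; linarith
  have hpigeon : ∃ i, i < N ∧ D (i+1) - D i < η * Δ / 2 := by
    by_contra h
    push_neg at h
    have h2 : ∀ i ∈ Finset.range N, η * Δ / 2 ≤ D (i+1) - D i := fun i hi =>
      h i (Finset.mem_range.mp hi)
    have hsum := Finset.sum_range_sub D N
    have hge : (N : ℝ) * (η * Δ / 2) ≤ D N - D 0 := by
      rw [← hsum]
      calc (N:ℝ) * (η * Δ / 2) = ∑ _i ∈ Finset.range N, η * Δ / 2 := by
            rw [Finset.sum_const, Finset.card_range, nsmul_eq_mul]
      _ ≤ ∑ i ∈ Finset.range N, (D (i+1) - D i) := Finset.sum_le_sum h2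
    have hb1 := (abs_le.mp (hDle N)).2
    have hb2 := (abs_le.mp (hDle 0)).1
    nlinarith [mul_pos hΔ (sub_pos.mpr hN')]
  obtain ⟨i, hiN, hgap⟩ := hpigeon
  have htN : t (i+1) ≤ ε₁ := by
    have h1 : ((i:ℝ) + 1) + 1 ≤ (N:ℝ) + 2 := by
      have : (i:ℝ) ≤ (N:ℝ) := by exact_mod_cast le_of_lt hiN
      linarith
    calc t (i+1) = ((i:ℝ) + 1 + 1) * Δ := by rw [ht_eq]; push_cast; ring
    _ ≤ ((N:ℝ) + 2) * Δ := by nlinarith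
    _ = ε₁ := hΔeq
  obtain ⟨δ, hδpos, hδa, hδb⟩ : ∃ d : ℝ, 0 < d ∧ d ≤ Δ * η / 8 ∧ d ≤ η' / 4 :=
    ⟨min (Δ * η / 8) (η' / 4), lt_min (by positivity) (by positivity),
      min_le_left _ _, min_le_right _ _⟩
  refine ⟨t (i+1), δ, ht_pos _, le_trans htN hε₁a, hδpos, ?_, ?_⟩
  · intro p hp hs
    obtain ⟨q, hq, hqeq⟩ := hex 0
    have hup : φ 0 - t (i+1) * R ≤ φ (t (i+1)) := by
      have h1 := hle (t (i+1)) q hq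
      have h2 := (abs_le.mp (hR q hq)).1
      have h3 : -(t (i+1) * R) ≤ t (i+1) * q.2 := by nlinarith [ht_pos (i+1)]
      nlinarith [hqeq]
    have h2εR : t (i+1) * (8 * R) ≤ η' := by
      calc t (i+1) * (8 * R) ≤ ε₁ * (8 * R) := by nlinarith
      _ ≤ η' := hε₁b
    have habs : t (i+1) * p.2 ≤ t (i+1) * R := by
      nlinarith [ht_pos (i+1), (abs_le.mp (hR p hp)).2]
    linarith [hs, hup, habs, h2εR, hδb]
  · intro p hp q hq hsp hsq
    have key : ∀ r ∈ A, φ (t (i+1)) - δ < r.1 + t (i+1) * r.2 →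
        Δ * r.2 < D (i+1) + δ ∧ D i - δ < Δ * r.2 := by
      intro r hr hsl
      constructor
      · have h2 := hle (t (i+1+1)) r hr
        have hprod : t (i+1+1) * r.2 = t (i+1) * r.2 + Δ * r.2 := by
          rw [ht_succ (i+1)]; ring
        rw [hDi]
        linarith [h2, hsl, hprod]
      · have h1 := hle (t i) r hr
        have hprod : t i * r.2 = t (i+1) * r.2 - Δ * r.2 := by
          rw [ht_succ i]; ring
        rw [hDi]
        linarith [h1, hsl, hprod]
    obtain ⟨hu1, hl1⟩ := key p hp hsp
    obtain ⟨hu2, hl2⟩ := key q hq hsq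
    have hd1 : Δ * (p.2 - q.2) < Δ * η := by linarith [hu1, hl2, hgap, hδa]
    have hd2 : Δ * (q.2 - p.2) < Δ * η := by linarith [hu2, hl1, hgap, hδa]
    rw [abs_le]
    exact ⟨by linarith [(mul_lt_mul_iff_right₀ hΔ).mp hd2],
      le_of_lt ((mul_lt_mul_iff_right₀ hΔ).mp hd1)⟩

/-- Transfer of the one-step lemma to the weak dual. -/
theorem step {C : Set (WeakDual ℂ V)} (hC : IsCompact C) (hne : C.Nonempty)
    (g w : V) {R η η' ε₀ : ℝ} (hR0 : 0 < R) (hR : ∀ Ψ ∈ C, |(Ψ w).re| ≤ R)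
    (hη : 0 < η) (hη' : 0 < η') (hε₀ : 0 < ε₀) :
    ∃ ε δ : ℝ, 0 < ε ∧ ε ≤ ε₀ ∧ 0 < δ ∧
      (∀ Ψ ∈ C, mm C (g + (ε:ℂ) • w) - δ < (Ψ (g + (ε:ℂ) • w)).re →
        mm C g - η' < (Ψ g).re) ∧
      (∀ Ψ ∈ C, ∀ Ψ' ∈ C, mm C (g + (ε:ℂ) • w) - δ < (Ψ (g + (ε:ℂ) • w)).re →
        mm C (g + (ε:ℂ) • w) - δ < (Ψ' (g + (ε:ℂ) • w)).re →
        |(Ψ w).re - (Ψ' w).re| ≤ η) := by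
  classical
  set A : Set (ℝ × ℝ) := (fun Ψ : WeakDual ℂ V => ((Ψ g).re, (Ψ w).re)) '' C with hA
  set φ : ℝ → ℝ := fun t => mm C (g + (t:ℂ) • w) with hφ
  have hφ0 : φ 0 = mm C g := by
    have h : g + ((0:ℝ):ℂ) • w = g := by norm_num
    show mm C (g + ((0:ℝ):ℂ) • w) = mm C g
    rw [h]
  have hle : ∀ t : ℝ, ∀ p ∈ A, p.1 + t * p.2 ≤ φ t := by
    rintro t p ⟨Ψ, hΨ, rfl⟩
    have := le_mm hC hΨ (g + (t:ℂ) • w)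
    rwa [re_apply] at this
  have hex : ∀ t : ℝ, ∃ p ∈ A, p.1 + t * p.2 = φ t := by
    intro t
    obtain ⟨Φ, hΦ, h⟩ := exists_mm hC hne (g + (t:ℂ) • w)
    exact ⟨_, mem_image_of_mem _ hΦ, by rwa [re_apply] at h⟩
  have hRA : ∀ p ∈ A, |p.2| ≤ R := by rintro p ⟨Ψ, hΨ, rfl⟩; exact hR Ψ hΨ
  obtain ⟨ε, δ, hε, hεa, hδ, hloc, hosc⟩ := absStep A φ hle hex hRA hR0 hη hη' hε₀
  refine ⟨ε, δ, hε, hεa, hδ, ?_, ?_⟩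
  · intro Ψ hΨ hs
    have := hloc _ (mem_image_of_mem _ hΨ) (by rw [← re_apply]; exact hs)
    rwa [hφ0] at this
  · intro Ψ hΨ Ψ' hΨ' hs hs'
    exact hosc _ (mem_image_of_mem _ hΨ) _ (mem_image_of_mem _ hΨ')
      (by rw [← re_apply]; exact hs) (by rw [← re_apply]; exact hs')

set_option maxHeartbeats 1000000 in
/-- Main recursion: in every slice of a compact convex set there is an exposed point. -/
theorem exposed_in_slice [CompleteSpace V] [TopologicalSpace.SeparableSpace V]
    {C : Set (WeakDual ℂ V)} (hC : IsCompact C) (hne : C.Nonempty)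
    (f₀ : V) {δ₀ : ℝ} (hδ₀ : 0 < δ₀) :
    ∃ Φ ∈ C, mm C f₀ - δ₀ < (Φ f₀).re ∧ ∃ g : V, ∀ Ψ ∈ C, Ψ ≠ Φ → (Ψ g).re < (Φ g).re := by
  classical
  -- uniform norm bound on C
  obtain ⟨RR, hRR0, hRR⟩ : ∃ RR : ℝ, 0 < RR ∧ ∀ Ψ ∈ C, ∀ v : V, |(Ψ v).re| ≤ RR * ‖v‖ := by
    have h : ∀ x : V, ∃ M, ∀ i : C, ‖(i : WeakDual ℂ V) x‖ ≤ M := by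
      intro x
      obtain ⟨M, hM⟩ := (hC.image (continuous_norm.comp (WeakDual.eval_continuous x))).bddAbove
      exact ⟨M, fun i => hM (mem_image_of_mem _ i.2)⟩
    obtain ⟨R, hR⟩ := banach_steinhaus (g := fun i : C => ((i : WeakDual ℂ V) : V →L[ℂ] ℂ)) h
    refine ⟨max R 0 + 1, by positivity, fun Ψ hΨ v => ?_⟩
    have h2 : ‖(show V →L[ℂ] ℂ from Ψ)‖ ≤ R := hR ⟨Ψ, hΨ⟩
    calc |(Ψ v).re| ≤ ‖Ψ v‖ := Complex.abs_re_le_norm _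
    _ ≤ ‖(show V →L[ℂ] ℂ from Ψ)‖ * ‖v‖ := (show V →L[ℂ] ℂ from Ψ).le_opNorm v
    _ ≤ (max R 0 + 1) * ‖v‖ := by
        have := norm_nonneg v
        nlinarith [le_max_left R 0]
  set B : ℝ := 8 * RR with hB
  have hBpos : 0 < B := by positivity
  -- dense sequence
  have : Nonempty V := ⟨0⟩
  set u : ℕ → V := TopologicalSpace.denseSeq V with hu
  have hdense : DenseRange u := TopologicalSpace.denseRange_denseSeq V
  set w : ℕ → V := fun n => u (Nat.unpair n).1 with hw
  -- the one-step spec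
  have main : ∀ (n : ℕ) (p : V × ℝ), 0 < p.2 → ∃ q : V × ℝ, 0 < q.2 ∧ q.2 ≤ p.2 / 2 ∧
      dist q.1 p.1 ≤ p.2 / B ∧
      (∀ Ψ ∈ C, mm C q.1 - q.2 < (Ψ q.1).re → mm C p.1 - p.2 < (Ψ p.1).re) ∧
      (∀ Ψ ∈ C, ∀ Ψ' ∈ C, mm C q.1 - q.2 < (Ψ q.1).re → mm C q.1 - q.2 < (Ψ' q.1).re →
        |(Ψ (w n)).re - (Ψ' (w n)).re| ≤ (1/2)^n) := by
    intro n p hp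
    have hRw : ∀ Ψ ∈ C, |(Ψ (w n)).re| ≤ RR * ‖w n‖ + 1 := fun Ψ hΨ => by
      have := hRR Ψ hΨ (w n); linarith
    obtain ⟨ε, δ, hε, hεa, hδ, hloc, hosc⟩ :=
      step hC hne p.1 (w n) (R := RR * ‖w n‖ + 1) (η := (1/2)^n) (η' := p.2 / 2)
        (ε₀ := p.2 / (B * (‖w n‖ + 1)))
        (by positivity) hRw (by positivity) (by positivity) (by positivity)
    refine ⟨(p.1 + (ε:ℂ) • (w n), min δ (p.2 / 2)), lt_min hδ (by positivity),
      min_le_right _ _, ?_, ?_, ?_⟩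
    · show dist (p.1 + (ε:ℂ) • (w n)) p.1 ≤ p.2 / B
      rw [dist_eq_norm]
      have h1 : p.1 + (ε:ℂ) • (w n) - p.1 = (ε:ℂ) • (w n) := by abel
      rw [h1, norm_smul]
      have h2 : ‖(ε:ℂ)‖ = ε := by
        simp [abs_of_pos hε]
      rw [h2]
      calc ε * ‖w n‖ ≤ p.2 / (B * (‖w n‖ + 1)) * ‖w n‖ := by
            nlinarith [norm_nonneg (w n)]
      _ ≤ p.2 / B := by
            rw [div_mul_eq_mul_div, div_le_div_iff₀ (by positivity) hBpos]
            nlinarith [norm_nonneg (w n), hp]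
    · intro Ψ hΨ hs
      have : mm C (p.1 + (ε:ℂ) • (w n)) - δ < (Ψ (p.1 + (ε:ℂ) • (w n))).re := by
        have := min_le_left δ (p.2 / 2)
        simp only at hs
        linarith [hs]
      have h2 := hloc Ψ hΨ this
      linarith [h2, hp]
    · intro Ψ hΨ Ψ' hΨ' hs hs'
      have hm := min_le_left δ (p.2 / 2)
      simp only at hs hs'
      exact hosc Ψ hΨ Ψ' hΨ' (by linarith [hs]) (by linarith [hs'])
  -- build the recursion
  obtain ⟨next, hnext⟩ : ∃ next : ℕ → V × ℝ → V × ℝ, ∀ n p, 0 < p.2 →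
      0 < (next n p).2 ∧ (next n p).2 ≤ p.2 / 2 ∧ dist (next n p).1 p.1 ≤ p.2 / B ∧
      (∀ Ψ ∈ C, mm C (next n p).1 - (next n p).2 < (Ψ (next n p).1).re →
        mm C p.1 - p.2 < (Ψ p.1).re) ∧
      (∀ Ψ ∈ C, ∀ Ψ' ∈ C, mm C (next n p).1 - (next n p).2 < (Ψ (next n p).1).re →
        mm C (next n p).1 - (next n p).2 < (Ψ' (next n p).1).re →
        |(Ψ (w n)).re - (Ψ' (w n)).re| ≤ (1/2)^n) := by
    refine ⟨fun n p => if h : 0 < p.2 then Classical.choose (main n p h) else p,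
      fun n p h => ?_⟩
    simp only [dif_pos h]
    exact Classical.choose_spec (main n p h)
  set st : ℕ → V × ℝ := fun n => Nat.rec (f₀, δ₀) next n with hst
  set gs : ℕ → V := fun n => (st n).1 with hgs
  set ds : ℕ → ℝ := fun n => (st n).2 with hds
  have hst0 : st 0 = (f₀, δ₀) := rfl
  have hstS : ∀ n, st (n+1) = next n (st n) := fun n => rfl
  have hdpos : ∀ n, 0 < ds n := by
    intro n
    induction n with
    | zero => exact hδ₀
    | succ n ih =>
      have := (hnext n (st n) ih).1
      simpa only [hds, hstS n] using this
  have hspec := fun n => hnext n (st n) (hdpos n)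
  have hhalf : ∀ n, ds (n+1) ≤ ds n / 2 := fun n => by
    have := (hspec n).2.1; simpa only [hds, hstS n] using this
  have hdist : ∀ n, dist (gs (n+1)) (gs n) ≤ ds n / B := fun n => by
    have := (hspec n).2.2.1; simpa only [hgs, hds, hstS n] using this
  have hloc : ∀ n, ∀ Ψ ∈ C, mm C (gs (n+1)) - ds (n+1) < (Ψ (gs (n+1))).re →
      mm C (gs n) - ds n < (Ψ (gs n)).re := fun n => by
    have := (hspec n).2.2.2.1; simpa only [hgs, hds, hstS n] using this
  have hosc : ∀ n, ∀ Ψ ∈ C, ∀ Ψ' ∈ C,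
      mm C (gs (n+1)) - ds (n+1) < (Ψ (gs (n+1))).re →
      mm C (gs (n+1)) - ds (n+1) < (Ψ' (gs (n+1))).re →
      |(Ψ (w n)).re - (Ψ' (w n)).re| ≤ (1/2)^n := fun n => by
    have := (hspec n).2.2.2.2; simpa only [hgs, hds, hstS n] using this
  have hgs0 : gs 0 = f₀ := by simp only [hgs, hst0]
  have hds0 : ds 0 = δ₀ := by simp only [hds, hst0]
  clear_value st
  -- geometric decay
  have hgeo : ∀ n k, ds (n + k) ≤ ds n * (1/2)^k := by
    intro n k
    induction k with
    | zero => simp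
    | succ k ih =>
      calc ds (n + (k+1)) = ds ((n+k)+1) := rfl
      _ ≤ ds (n+k) / 2 := hhalf _
      _ ≤ ds n * (1/2)^k / 2 := by linarith
      _ = ds n * (1/2)^(k+1) := by ring
  have hdist' : ∀ n, B * dist (gs (n+1)) (gs n) ≤ ds n := by
    intro n
    have h := hdist n
    calc B * dist (gs (n+1)) (gs n) ≤ B * (ds n / B) :=
          mul_le_mul_of_nonneg_left h (le_of_lt hBpos)
    _ = ds n := by field_simp
  -- distance estimate (multiplied by B to keep linarith happy)
  have hdd : ∀ n k, B * dist (gs (n + k)) (gs n) ≤ 2 * ds n * (1 - (1/2)^k) := by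
    intro n k
    induction k with
    | zero => simp
    | succ k ih =>
      have h1 : dist (gs (n+(k+1))) (gs n) ≤ dist (gs ((n+k)+1)) (gs (n+k)) + dist (gs (n+k)) (gs n) :=
        dist_triangle _ _ _
      have h1' : B * dist (gs (n+(k+1))) (gs n) ≤
          B * dist (gs ((n+k)+1)) (gs (n+k)) + B * dist (gs (n+k)) (gs n) := by
        have := mul_le_mul_of_nonneg_left h1 (le_of_lt hBpos)
        linarith [this]
      have h2 := hdist' (n+k)
      have h3 := hgeo n k
      rw [pow_succ]
      linarith [h1', h2, h3, ih]
  -- Cauchy and limit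
  have hcau : CauchySeq gs := by
    refine cauchySeq_of_le_geometric (1/2) (δ₀ / B) (by norm_num) (fun n => ?_)
    have h2 := hdist' n
    have h3 : ds n ≤ δ₀ * (1/2)^n := by
      have := hgeo 0 n
      rwa [Nat.zero_add, hds0] at this
    rw [dist_comm]
    rw [show δ₀ / B * (1/2)^n = δ₀ * (1/2)^n / B by ring, le_div_iff₀ hBpos]
    calc dist (gs (n+1)) (gs n) * B = B * dist (gs (n+1)) (gs n) := by ring
    _ ≤ ds n := h2
    _ ≤ δ₀ * (1/2)^n := h3
  obtain ⟨g, hg⟩ := cauchySeq_tendsto_of_complete hcau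
  have htail : ∀ n, B * dist g (gs n) ≤ 2 * ds n := by
    intro n
    have h1 : Filter.Tendsto (fun m => B * dist (gs m) (gs n)) Filter.atTop
        (𝓝 (B * dist g (gs n))) := (hg.dist tendsto_const_nhds).const_mul B
    refine le_of_tendsto h1 (Filter.eventually_atTop.mpr ⟨n, fun m hm => ?_⟩)
    obtain ⟨k, rfl⟩ := Nat.exists_eq_add_of_le hm
    have h2 := hdd n k
    have h3 : (0:ℝ) ≤ (1/2)^k := by positivity
    have h4 : (0:ℝ) ≤ ds n := le_of_lt (hdpos n)
    nlinarith [mul_nonneg h4 h3]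
  -- every maximizer of g lies in all slices
  have hkey : ∀ Ψ ∈ C, (Ψ g).re = mm C g → ∀ n, mm C (gs n) - ds n < (Ψ (gs n)).re := by
    intro Ψ hΨ hmax n
    have hsub : ∀ (Θ : WeakDual ℂ V), Θ ∈ C → |(Θ g).re - (Θ (gs n)).re| ≤ RR * dist g (gs n) := by
      intro Θ hΘ
      have h1 := hRR Θ hΘ (g - gs n)
      have h2 : (Θ (g - gs n)).re = (Θ g).re - (Θ (gs n)).re := by
        rw [map_sub, Complex.sub_re]
      rw [dist_eq_norm, ← h2]
      exact h1
    have hm2 : mm C (gs n) - RR * dist g (gs n) ≤ mm C g := by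
      obtain ⟨Φn, hΦn, hΦneq⟩ := exists_mm hC hne (gs n)
      have h1 := (abs_le.mp (hsub Φn hΦn)).1
      have h2 := le_mm hC hΦn g
      linarith
    have h3 := (abs_le.mp (hsub Ψ hΨ)).2
    have h4 : 8 * RR * dist g (gs n) ≤ 2 * ds n := by
      have := htail n
      rwa [hB] at this
    have h6 := hdpos n
    have h7 : (0:ℝ) ≤ dist g (gs n) := dist_nonneg
    nlinarith [h3, hm2, h4, mul_nonneg (le_of_lt hRR0) h7]
  -- conclusion
  obtain ⟨Φ, hΦC, hΦmax⟩ := exists_mm hC hne g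
  refine ⟨Φ, hΦC, ?_, g, ?_⟩
  · have h := hkey Φ hΦC hΦmax 0
    rwa [hgs0, hds0] at h
  · intro Ψ hΨ hneq
    rcases lt_or_eq_of_le (le_mm hC hΨ g) with h | h
    · rwa [hΦmax]
    · exfalso
      apply hneq
      have hΨn := hkey Ψ hΨ h
      have hΦn := hkey Φ hΦC hΦmax
      have hoscn : ∀ n, |(Ψ (w n)).re - (Φ (w n)).re| ≤ (1/2)^n := fun n =>
        hosc n Ψ hΨ Φ hΦC (hΨn (n+1)) (hΦn (n+1))
      clear hkey hΨn hΦn main hnext hspec hst0 hstS hloc hosc hdd hdist hdist' hgeo hhalf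
      clear hdpos htail hcau hg hgs0 hds0
      have hum : ∀ m, (Ψ (u m)).re = (Φ (u m)).re := by
        intro m
        have h0 : ∀ j : ℕ, |(Ψ (u m)).re - (Φ (u m)).re| ≤ (1/2)^j := by
          intro j
          have h1 := hoscn (Nat.pair m j)
          have h2 : w (Nat.pair m j) = u m := by
            rw [hw]; simp [Nat.unpair_pair]
          rw [h2] at h1
          calc |(Ψ (u m)).re - (Φ (u m)).re| ≤ (1/2)^(Nat.pair m j) := h1
          _ ≤ (1/2)^j := by
              refine pow_le_pow_of_le_one (by norm_num) (by norm_num) (Nat.right_le_pair m j)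
        have h2 : |(Ψ (u m)).re - (Φ (u m)).re| ≤ 0 := by
          refine ge_of_tendsto' (tendsto_pow_atTop_nhds_zero_of_lt_one (by norm_num) (by norm_num)) h0
        have := abs_nonneg ((Ψ (u m)).re - (Φ (u m)).re)
        have : |(Ψ (u m)).re - (Φ (u m)).re| = 0 := le_antisymm h2 this
        linarith [abs_eq_zero.mp this, sub_eq_zero.mp (abs_eq_zero.mp this)]
      have hre : ∀ v : V, (Ψ v).re = (Φ v).re := by
        have hc1 : Continuous fun v : V => (Ψ v).re :=
          Complex.continuous_re.comp (show V →L[ℂ] ℂ from Ψ).continuous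
        have hc2 : Continuous fun v : V => (Φ v).re :=
          Complex.continuous_re.comp (show V →L[ℂ] ℂ from Φ).continuous
        have := hdense.equalizer hc1 hc2 (funext fun m => hum m)
        exact fun v => congr_fun this v
      apply DFunLike.ext
      intro v
      have him : (Ψ v).im = (Φ v).im := by
        have h1 := hre (Complex.I • v)
        rw [map_smul, map_smul, smul_eq_mul, smul_eq_mul] at h1
        simpa [Complex.mul_re] using h1
      exact Complex.ext (hre v) him

/-- Separation of a point from a weak-* compact convex set. -/
theorem sep {K : Set (WeakDual ℂ V)} (hK : IsCompact K) (hKconv : Convex ℝ K)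
    {x : WeakDual ℂ V} (hx : x ∉ K) :
    ∃ f : V, ∀ Φ ∈ K, (Φ f).re < (x f).re := by
  classical
  have hinj : Function.Injective (topDualPairing ℂ V) := fun a b h =>
    ContinuousLinearMap.coe_injective h
  have hind := (WeakBilin.isEmbedding hinj).toIsInducing
  have hKc : Kᶜ ∈ 𝓝 x := hK.isClosed.isOpen_compl.mem_nhds hx
  replace hKc := Filter.mem_comap.mp ((hind.nhds_eq_comap x).ge hKc)
  obtain ⟨S, hS, hSsub⟩ := hKc
  rw [nhds_pi, Filter.mem_pi] at hS
  obtain ⟨I, hIfin, t, ht, hIsub⟩ := hS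
  set s : Finset V := hIfin.toFinset with hs
  -- criterion for membership in Kᶜ
  have hcrit : ∀ Ψ : WeakDual ℂ V, (∀ v ∈ s, Ψ v = x v) → Ψ ∉ K := by
    intro Ψ hΨ
    intro hΨK
    have h1 : (fun v => topDualPairing ℂ V Ψ v) ∈ I.pi t := by
      intro v hv
      have h2 := hΨ v (hIfin.mem_toFinset.mpr hv)
      have h3 : x v ∈ t v := mem_of_mem_nhds (ht v)
      show Ψ v ∈ t v
      rw [h2]; exact h3
    exact hSsub (hIsub h1) hΨK
  -- the finite-dimensional picture
  set X := ({v : V // v ∈ s} → ℂ) with hX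
  set T : WeakDual ℂ V → X := fun Ψ v => Ψ (v : V) with hT
  have hTlin : IsLinearMap ℝ T := by
    constructor
    · intro a b; rfl
    · intro r a
      funext v
      show (r • a) (v : V) = r • (a (v : V))
      rw [Complex.real_smul]
      rfl
  have hTcont : Continuous T := continuous_pi fun v => WeakDual.eval_continuous (v : V)
  have hTK : IsCompact (T '' K) := hK.image hTcont
  have hTKconv : Convex ℝ (T '' K) := by
    rintro _ ⟨a, ha, rfl⟩ _ ⟨b, hb, rfl⟩ r q hr hq hrq
    refine ⟨r • a + q • b, hKconv ha hb hr hq hrq, ?_⟩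
    funext v
    show (r • a + q • b) (v : V) = r • (a (v : V)) + q • (b (v : V))
    rw [Complex.real_smul, Complex.real_smul]
    rfl
  have hTx : T x ∉ T '' K := by
    rintro ⟨Ψ, hΨK, hTeq⟩
    refine hcrit Ψ (fun v hv => ?_) hΨK
    exact congrFun hTeq ⟨v, by simpa using hv⟩
  obtain ⟨l, u, hl, hu⟩ := geometric_hahn_banach_closed_point hTKconv hTK.isClosed hTx
  -- reconstruct the functional
  set c : {v : V // v ∈ s} → ℂ := fun v => (l (Pi.single v 1) : ℝ) - (l (Pi.single v Complex.I) : ℝ) * Complex.I with hc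
  set f : V := ∑ v : {v : V // v ∈ s}, c v • (v : V) with hf
  have key : ∀ Ψ : WeakDual ℂ V, (Ψ f).re = l (T Ψ) := by
    intro Ψ
    have h1 : Ψ f = ∑ v : {v : V // v ∈ s}, c v * Ψ (v : V) := by
      rw [hf, map_sum]
      congr 1
      funext v
      rw [map_smul]
      rfl
    have h2 : (Ψ f).re = ∑ v : {v : V // v ∈ s}, ((Ψ (v:V)).re * l (Pi.single v 1)
        + (Ψ (v:V)).im * l (Pi.single v Complex.I)) := by
      rw [h1, Complex.re_sum]
      congr 1
      funext v
      rw [hc]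
      simp [Complex.mul_re, Complex.sub_re, Complex.sub_im, Complex.mul_im]
      ring
    have h3 : T Ψ = ∑ v : {v : V // v ∈ s}, ((Ψ (v:V)).re • (Pi.single v (1:ℂ) : {v : V // v ∈ s} → ℂ)
        + (Ψ (v:V)).im • (Pi.single v Complex.I : {v : V // v ∈ s} → ℂ)) := by
      have h0 := (Finset.univ_sum_single (T Ψ)).symm
      rw [h0]
      refine Finset.sum_congr rfl fun v _ => ?_
      have hz : T Ψ v = ((Ψ (v:V)).re : ℝ) • (1:ℂ) + ((Ψ (v:V)).im : ℝ) • Complex.I := by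
        show Ψ (v:V) = _
        rw [Complex.real_smul, Complex.real_smul, mul_one, Complex.re_add_im]
      rw [hz, Pi.single_add, Pi.single_smul, Pi.single_smul]
    rw [h2, h3, map_sum]
    congr 1
    funext v
    rw [map_add, map_smul, map_smul]
    simp [smul_eq_mul]
  refine ⟨f, fun Φ hΦ => ?_⟩
  rw [key Φ, key x]
  exact lt_trans (hl _ (mem_image_of_mem _ hΦ)) hu

instance : NoZeroSMulDivisors ℝ (WeakDual ℂ V) := by
  constructor
  intro r Ψ h
  by_cases hr : r = 0
  · exact Or.inl hr
  · refine Or.inr (DFunLike.ext _ _ fun v => ?_)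
    have h1 : (r • Ψ) v = 0 := by rw [h]; rfl
    have h2 : (r:ℂ) * Ψ v = 0 := h1
    rcases mul_eq_zero.mp h2 with h3 | h3
    · exact absurd (by exact_mod_cast h3) hr
    · rw [h3]; rfl

theorem contJoin : Continuous (fun p : ℝ × (WeakDual ℂ V) × (WeakDual ℂ V) =>
    (1 - p.1) • p.2.1 + p.1 • p.2.2) := by
  apply WeakDual.continuous_of_continuous_eval
  intro y
  show Continuous fun p : ℝ × (WeakDual ℂ V) × (WeakDual ℂ V) =>
    (1 - p.1) • (p.2.1 y) + p.1 • (p.2.2 y)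
  exact ((continuous_const.sub continuous_fst).smul
      ((WeakDual.eval_continuous y).comp (continuous_fst.comp continuous_snd))).add
    (continuous_fst.smul ((WeakDual.eval_continuous y).comp (continuous_snd.comp continuous_snd)))

theorem isCompact_convexJoin {s t : Set (WeakDual ℂ V)} (hs : IsCompact s) (ht : IsCompact t) :
    IsCompact (convexJoin ℝ s t) := by
  have heq : convexJoin ℝ s t = (fun p : ℝ × (WeakDual ℂ V) × (WeakDual ℂ V) =>
      (1 - p.1) • p.2.1 + p.1 • p.2.2) '' (Icc (0:ℝ) 1 ×ˢ s ×ˢ t) := by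
    ext z
    constructor
    · intro hz
      obtain ⟨a, ha, b, hb, hseg⟩ := mem_convexJoin.mp hz
      rw [segment_eq_image ℝ a b] at hseg
      obtain ⟨θ, hθ, rfl⟩ := hseg
      exact ⟨(θ, a, b), ⟨hθ, ha, hb⟩, rfl⟩
    · rintro ⟨⟨θ, a, b⟩, ⟨hθ, ha, hb⟩, rfl⟩
      refine mem_convexJoin.mpr ⟨a, ha, b, hb, ?_⟩
      rw [segment_eq_image ℝ a b]
      exact ⟨θ, hθ, rfl⟩
  rw [heq]
  exact (isCompact_Icc.prod (hs.prod ht)).image contJoin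

theorem extreme_join {C A B : Set (WeakDual ℂ V)} (hA : A ⊆ C) (hB : B ⊆ C)
    {x : WeakDual ℂ V} (hx : x ∈ Set.extremePoints ℝ C) (hmem : x ∈ convexJoin ℝ A B) :
    x ∈ A ∪ B := by
  obtain ⟨a, ha, b, hb, hseg⟩ := mem_convexJoin.mp hmem
  rcases (mem_extremePoints_iff_forall_segment.mp hx).2 a (hA ha) b (hB hb) hseg with h | h
  · left; rwa [← h]
  · right; rwa [← h]

/-- Induction over a finite family of compact convex subsets of `C`. -/
theorem hull_finite_union {ι : Type*} (s : Finset ι) (A : ι → Set (WeakDual ℂ V))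
    (C : Set (WeakDual ℂ V)) (hCconv : Convex ℝ C)
    (hconv : ∀ i, Convex ℝ (A i)) (hsub : ∀ i, A i ⊆ C) (hcpt : ∀ i, IsCompact (A i)) :
    IsCompact (convexHull ℝ (⋃ i ∈ s, A i)) ∧
      (∀ x ∈ Set.extremePoints ℝ C, x ∈ convexHull ℝ (⋃ i ∈ s, A i) → ∃ i ∈ s, x ∈ A i) := by
  classical
  induction s using Finset.induction with
  | empty => simp
  | @insert j s hj ih =>
    have hU : (⋃ i ∈ insert j s, A i) = A j ∪ ⋃ i ∈ s, A i := by
      simp [Set.biUnion_insert]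
    rcases (A j).eq_empty_or_nonempty with hAj | hAj
    · have : (⋃ i ∈ insert j s, A i) = ⋃ i ∈ s, A i := by rw [hU, hAj, Set.empty_union]
      rw [this]
      exact ⟨ih.1, fun x hx hx2 => by
        obtain ⟨i, hi, hxi⟩ := ih.2 x hx hx2
        exact ⟨i, Finset.mem_insert_of_mem hi, hxi⟩⟩
    rcases (⋃ i ∈ s, A i).eq_empty_or_nonempty with hUs | hUs
    · have : (⋃ i ∈ insert j s, A i) = A j := by rw [hU, hUs, Set.union_empty]
      have hh : convexHull ℝ (A j) = A j := Set.Subset.antisymm (convexHull_min Set.Subset.rfl (hconv j)) (subset_convexHull ℝ _)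
      rw [this, hh]
      exact ⟨hcpt j, fun x _ hx2 => ⟨j, Finset.mem_insert_self _ _, hx2⟩⟩
    · have hhull : convexHull ℝ (⋃ i ∈ insert j s, A i) =
          convexJoin ℝ (A j) (convexHull ℝ (⋃ i ∈ s, A i)) := by
        have hh : convexHull ℝ (A j) = A j := Set.Subset.antisymm (convexHull_min Set.Subset.rfl (hconv j)) (subset_convexHull ℝ _)
        rw [hU, convexHull_union hAj hUs, hh]
      constructor
      · rw [hhull]
        exact isCompact_convexJoin (hcpt j) ih.1
      · intro x hx hx2
        rw [hhull] at hx2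
        have hsub2 : convexHull ℝ (⋃ i ∈ s, A i) ⊆ C :=
          convexHull_min (Set.iUnion₂_subset fun i _ => hsub i) hCconv
        rcases extreme_join (hsub j) hsub2 hx hx2 with h | h
        · exact ⟨j, Finset.mem_insert_self _ _, h⟩
        · obtain ⟨i, hi, hxi⟩ := ih.2 x hx h
          exact ⟨i, Finset.mem_insert_of_mem hi, hxi⟩

theorem exists_sep {Ψ x : WeakDual ℂ V} (h : Ψ ≠ x) : ∃ f : V, (Ψ f).re < (x f).re := by
  have hex : ∃ v, Ψ v ≠ x v := by
    by_contra hc; push_neg at hc; exact h (DFunLike.ext _ _ hc)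
  obtain ⟨v, hv⟩ := hex
  by_cases hre : (Ψ v).re = (x v).re
  · have him : (Ψ v).im ≠ (x v).im := fun h2 => hv (Complex.ext hre h2)
    rcases lt_or_gt_of_ne him with h2 | h2
    · refine ⟨(-Complex.I) • v, ?_⟩
      have e1 : ∀ Θ : WeakDual ℂ V, (Θ ((-Complex.I) • v)).re = (Θ v).im := by
        intro Θ; rw [map_smul]; simp [Complex.mul_re]
      rw [e1, e1]; exact h2
    · refine ⟨Complex.I • v, ?_⟩
      have e1 : ∀ Θ : WeakDual ℂ V, (Θ (Complex.I • v)).re = -(Θ v).im := by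
        intro Θ; rw [map_smul]; simp [Complex.mul_re]
      rw [e1, e1]; linarith
  · rcases lt_or_gt_of_ne hre with h2 | h2
    · exact ⟨v, h2⟩
    · refine ⟨(-1 : ℂ) • v, ?_⟩
      have e1 : ∀ Θ : WeakDual ℂ V, (Θ ((-1:ℂ) • v)).re = -(Θ v).re := by
        intro Θ; rw [map_smul]; simp
      rw [e1, e1]; linarith

end Klee

/-- Klee's theorem: in the dual of a separable Banach space, every extreme point of a
weak-* compact convex set `C` lies in the weak-* closure of the weak-* exposed points
of `C`. -/
theorem stmt17 {V : Type*} [NormedAddCommGroup V] [NormedSpace ℂ V] [CompleteSpace V]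
    [TopologicalSpace.SeparableSpace V]
    (C : Set (WeakDual ℂ V)) (hC : IsCompact C) (hconv : Convex ℝ C) :
    Set.extremePoints ℝ C ⊆
      closure {Φ ∈ C | ∃ f : V, ∀ Ψ ∈ C, Ψ ≠ Φ → (Ψ f).re < (Φ f).re} := by
  classical
  intro x hx
  rw [mem_closure_iff]
  intro U hUopen hxU
  have hxC : x ∈ C := hx.1
  have hne : C.Nonempty := ⟨x, hxC⟩
  obtain ⟨f₀, δ₀, hδ₀, hslice⟩ : ∃ f₀ : V, ∃ δ₀ : ℝ, 0 < δ₀ ∧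
      ∀ Ψ ∈ C, mm C f₀ - δ₀ < (Ψ f₀).re → Ψ ∈ U := by
    rcases (C \ U).eq_empty_or_nonempty with hCU | hCU
    · refine ⟨0, 1, one_pos, fun Ψ hΨ _ => ?_⟩
      by_contra h
      exact (Set.eq_empty_iff_forall_notMem.mp hCU Ψ) ⟨hΨ, h⟩
    · have hCUcpt : IsCompact (C \ U) := by
        rw [Set.diff_eq]
        exact hC.inter_right hUopen.isClosed_compl
      have hFex : ∀ Ψ : {Ψ : WeakDual ℂ V // Ψ ∈ C \ U},
          ∃ f : V, ((Ψ : WeakDual ℂ V) f).re < (x f).re := by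
        intro Ψ
        have hne' : (Ψ : WeakDual ℂ V) ≠ x := fun h => (h ▸ Ψ.2).2 hxU
        exact exists_sep hne'
      choose F hF using hFex
      set mid : {Ψ : WeakDual ℂ V // Ψ ∈ C \ U} → ℝ := fun i =>
        (((i : WeakDual ℂ V) (F i)).re + (x (F i)).re) / 2 with hmid
      set O : {Ψ : WeakDual ℂ V // Ψ ∈ C \ U} → Set (WeakDual ℂ V) := fun i =>
        {Φ | (Φ (F i)).re < mid i} with hO
      have hOopen : ∀ i, IsOpen (O i) := fun i => isOpen_lt (cont_re _) continuous_const
      have hcover : C \ U ⊆ ⋃ i, O i := fun Ψ hΨ => by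
        refine Set.mem_iUnion.mpr ⟨⟨Ψ, hΨ⟩, ?_⟩
        have := hF ⟨Ψ, hΨ⟩
        show (Ψ (F ⟨Ψ, hΨ⟩)).re < mid ⟨Ψ, hΨ⟩
        rw [hmid]
        dsimp only
        linarith
      obtain ⟨s, hs⟩ := hCUcpt.elim_finite_subcover O hOopen hcover
      set A : {Ψ : WeakDual ℂ V // Ψ ∈ C \ U} → Set (WeakDual ℂ V) := fun i =>
        {Φ ∈ C | (Φ (F i)).re ≤ mid i} with hA
      have hlin : ∀ f : V, IsLinearMap ℝ (fun Φ : WeakDual ℂ V => (Φ f).re) := by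
        intro f
        constructor
        · intro a b; rfl
        · intro r a
          show ((r • a) f).re = r • ((a f).re)
          have : (r • a) f = (r : ℂ) * (a f) := rfl
          rw [this, smul_eq_mul, Complex.re_ofReal_mul]
      have hAconv : ∀ i, Convex ℝ (A i) := fun i =>
        hconv.inter (convex_halfSpace_le (hlin (F i)) (mid i))
      have hAsub : ∀ i, A i ⊆ C := fun i => Set.sep_subset _ _
      have hAcpt : ∀ i, IsCompact (A i) := fun i => by
        have : A i = C ∩ {Φ | (Φ (F i)).re ≤ mid i} := rfl
        rw [this]
        exact hC.inter_right (isClosed_le (cont_re _) continuous_const)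
      obtain ⟨hKcpt, hKext⟩ := hull_finite_union s A C hconv hAconv hAsub hAcpt
      set K := convexHull ℝ (⋃ i ∈ s, A i) with hK
      have hxK : x ∉ K := by
        intro hxK
        obtain ⟨i, _, hxi⟩ := hKext x hx hxK
        have h1 : (x (F i)).re ≤ mid i := hxi.2
        have h2 := hF i
        rw [hmid] at h1
        dsimp only at h1
        linarith
      have hCUK : C \ U ⊆ K := by
        intro Ψ hΨ
        obtain ⟨i, hi, hΨi⟩ := Set.mem_iUnion₂.mp (hs hΨ)
        have : Ψ ∈ A i := ⟨hΨ.1, le_of_lt hΨi⟩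
        exact subset_convexHull ℝ _ (Set.mem_biUnion hi this)
      obtain ⟨f, hf⟩ := sep hKcpt (convex_convexHull ℝ _) hxK
      rcases K.eq_empty_or_nonempty with hKe | hKne
      · exfalso
        obtain ⟨Ψ, hΨ⟩ := hCU
        exact Set.eq_empty_iff_forall_notMem.mp hKe Ψ (hCUK hΨ)
      obtain ⟨Φm, hΦmK, hΦmeq⟩ := exists_mm hKcpt hKne f
      refine ⟨f, mm C f - mm K f, ?_, ?_⟩
      · have h1 : mm K f < (x f).re := by rw [← hΦmeq]; exact hf Φm hΦmK
        have h2 : (x f).re ≤ mm C f := le_mm hC hxC f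
        linarith
      · intro Ψ hΨ hΨs
        by_contra hΨU
        have hΨK : Ψ ∈ K := hCUK ⟨hΨ, hΨU⟩
        have := le_mm hKcpt hΨK f
        linarith
  obtain ⟨Φ, hΦC, hΦslice, g, hg⟩ := exposed_in_slice hC hne f₀ hδ₀
  exact ⟨Φ, hslice Φ hΦC hΦslice, hΦC, g, hg⟩
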